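/- Let G ∈ 𝕆^{n×k} with tr(GᵀD) ≠ 0 be a local maximizer of η on 𝕆^{n×k}. Then for every nonzero real n×k matrix H satisfying HᵀG = −GᵀH, it holds that tr(DᵀH)² ≤ η(G)·(tr(HᵀAH) − tr(H M(G) Hᵀ)). -/

import Mathlib

open Matrix Filter Asymptotics Topology

/-- The objective `η(G) = tr(GᵀD)² / tr(GᵀAG)`. -/
noncomputable def eta {n k : ℕ} (A : Matrix (Fin n) (Fin n) ℝ)
    (D G : Matrix (Fin n) (Fin k) ℝ) : ℝ :=
  (Matrix.trace (Gᵀ * D)) ^ 2 / Matrix.trace (Gᵀ * A * G)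

/-- `ξ(G) = tr(GᵀAG) / tr(GᵀD)`. -/
noncomputable def xi {n k : ℕ} (A : Matrix (Fin n) (Fin n) ℝ)
    (D G : Matrix (Fin n) (Fin k) ℝ) : ℝ :=
  Matrix.trace (Gᵀ * A * G) / Matrix.trace (Gᵀ * D)

/-- `sym(B) = (B + Bᵀ)/2`. -/
noncomputable def symPart {k : ℕ} (B : Matrix (Fin k) (Fin k) ℝ) : Matrix (Fin k) (Fin k) ℝ :=
  (1 / 2 : ℝ) • (B + Bᵀ)

/-- `M(G) = sym(GᵀAG − ξ(G)·GᵀD)`. -/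
noncomputable def Mmat {n k : ℕ} (A : Matrix (Fin n) (Fin n) ℝ)
    (D G : Matrix (Fin n) (Fin k) ℝ) : Matrix (Fin k) (Fin k) ℝ :=
  symPart (Gᵀ * A * G - xi A D G • (Gᵀ * D))

/-- `E(G) = A − ξ(G)·(DGᵀ + GDᵀ)`. -/
noncomputable def Emat {n k : ℕ} (A : Matrix (Fin n) (Fin n) ℝ)
    (D G : Matrix (Fin n) (Fin k) ℝ) : Matrix (Fin n) (Fin n) ℝ :=
  A - xi A D G • (D * Gᵀ + G * Dᵀ)

/-- The Frobenius norm of a real matrix. -/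
noncomputable def frobNorm {n k : ℕ} (M : Matrix (Fin n) (Fin k) ℝ) : ℝ :=
  Real.sqrt (∑ i, ∑ j, (M i j) ^ 2)

/-- `G` is a local maximizer of `η` on the Stiefel manifold `𝕆^{n×k}`. -/
def IsLocalMaxEta {n k : ℕ} (A : Matrix (Fin n) (Fin n) ℝ)
    (D G : Matrix (Fin n) (Fin k) ℝ) : Prop :=
  Gᵀ * G = 1 ∧ ∃ ε > (0 : ℝ), ∀ G' : Matrix (Fin n) (Fin k) ℝ,
    G'ᵀ * G' = 1 → frobNorm (G' - G) < ε → eta A D G' ≤ eta A D G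

namespace SOAux

/-! ### Scalar second-order jets at `0` -/

/-- Second-order (Peano) jet at `0`. -/
def J2 (f : ℝ → ℝ) (a0 a1 a2 : ℝ) : Prop :=
  (fun t => f t - (a0 + a1 * t + a2 * t ^ 2)) =o[𝓝 (0:ℝ)] fun t => t ^ 2

lemma j2_poly (a0 a1 a2 : ℝ) : J2 (fun t => a0 + a1 * t + a2 * t ^ 2) a0 a1 a2 := by
  unfold J2
  have : (fun t : ℝ => (a0 + a1*t + a2*t^2) - (a0 + a1*t + a2*t^2)) = fun _ => (0:ℝ) := by
    funext t; ring
  rw [this]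
  exact isLittleO_zero _ _

lemma J2.congr_fun {f g : ℝ → ℝ} {a0 a1 a2 : ℝ} (h : J2 f a0 a1 a2)
    (hfg : ∀ t, f t = g t) : J2 g a0 a1 a2 :=
  h.congr_left fun t => by rw [hfg]

lemma J2.of_eq {f : ℝ → ℝ} {a0 a1 a2 b0 b1 b2 : ℝ} (h : J2 f a0 a1 a2)
    (h0 : a0 = b0) (h1 : a1 = b1) (h2 : a2 = b2) : J2 f b0 b1 b2 := by
  rw [← h0, ← h1, ← h2]; exact h

lemma J2.tendsto {f : ℝ → ℝ} {a0 a1 a2 : ℝ} (h : J2 f a0 a1 a2) :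
    Tendsto f (𝓝 0) (𝓝 a0) := by
  have hsq : Tendsto (fun t : ℝ => t ^ 2) (𝓝 0) (𝓝 0) := by
    simpa using ((continuous_pow 2).tendsto (0:ℝ))
  have h1 : Tendsto (fun t => f t - (a0 + a1*t + a2*t^2)) (𝓝 0) (𝓝 0) :=
    h.isBigO.trans_tendsto hsq
  have h2 : Tendsto (fun t : ℝ => a0 + a1*t + a2*t^2) (𝓝 0) (𝓝 a0) := by
    have hc : Continuous fun t : ℝ => a0 + a1*t + a2*t^2 := by continuity
    simpa using hc.tendsto 0
  simpa using h1.add h2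

lemma j2_const (c : ℝ) : J2 (fun _ => c) c 0 0 :=
  (j2_poly c 0 0).congr_fun fun t => by ring

lemma J2.add {f g : ℝ → ℝ} {a0 a1 a2 b0 b1 b2 : ℝ} (hf : J2 f a0 a1 a2)
    (hg : J2 g b0 b1 b2) : J2 (fun t => f t + g t) (a0+b0) (a1+b1) (a2+b2) :=
  (Asymptotics.IsLittleO.add hf hg).congr_left fun t => by ring

lemma J2.sub {f g : ℝ → ℝ} {a0 a1 a2 b0 b1 b2 : ℝ} (hf : J2 f a0 a1 a2)
    (hg : J2 g b0 b1 b2) : J2 (fun t => f t - g t) (a0-b0) (a1-b1) (a2-b2) :=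
  (Asymptotics.IsLittleO.sub hf hg).congr_left fun t => by ring

lemma J2.const_mul {f : ℝ → ℝ} {a0 a1 a2 : ℝ} (c : ℝ) (hf : J2 f a0 a1 a2) :
    J2 (fun t => c * f t) (c*a0) (c*a1) (c*a2) :=
  (hf.const_mul_left c).congr_left fun t => by ring

lemma J2.mul_const {f : ℝ → ℝ} {a0 a1 a2 : ℝ} (c : ℝ) (hf : J2 f a0 a1 a2) :
    J2 (fun t => f t * c) (a0*c) (a1*c) (a2*c) := by
  have := (J2.const_mul c hf).congr_fun (g := fun t => f t * c) fun t => by ring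
  simpa [mul_comm] using this

lemma j2_t3 : (fun t : ℝ => t ^ 3) =o[𝓝 (0:ℝ)] fun t : ℝ => t ^ 2 := by
  have h1 : (fun t : ℝ => t) =o[𝓝 (0:ℝ)] (fun _ => (1:ℝ)) :=
    (isLittleO_one_iff ℝ).mpr (by simpa using continuous_id'.tendsto (0:ℝ))
  have := h1.mul_isBigO (isBigO_refl (fun t : ℝ => t ^ 2) (𝓝 (0:ℝ)))
  refine (this.congr_left fun t => by ring).congr_right fun t => by ring

lemma j2_t4 : (fun t : ℝ => t ^ 4) =o[𝓝 (0:ℝ)] fun t : ℝ => t ^ 2 := by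
  have h1 : (fun t : ℝ => t ^ 2) =o[𝓝 (0:ℝ)] (fun _ => (1:ℝ)) :=
    (isLittleO_one_iff ℝ).mpr (by simpa using (continuous_pow 2).tendsto (0:ℝ))
  have := h1.mul_isBigO (isBigO_refl (fun t : ℝ => t ^ 2) (𝓝 (0:ℝ)))
  refine (this.congr_left fun t => by ring).congr_right fun t => by ring

lemma J2.mul {f g : ℝ → ℝ} {a0 a1 a2 b0 b1 b2 : ℝ} (hf : J2 f a0 a1 a2)
    (hg : J2 g b0 b1 b2) :
    J2 (fun t => f t * g t) (a0*b0) (a0*b1+a1*b0) (a0*b2+a1*b1+a2*b0) := by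
  have hgO : g =O[𝓝 (0:ℝ)] (fun _ => (1:ℝ)) := hg.tendsto.isBigO_one ℝ
  have hPfO : (fun t : ℝ => a0 + a1*t + a2*t^2) =O[𝓝 (0:ℝ)] (fun _ => (1:ℝ)) :=
    (j2_poly a0 a1 a2).tendsto.isBigO_one ℝ
  have term1 : (fun t => (f t - (a0 + a1*t + a2*t^2)) * g t) =o[𝓝 (0:ℝ)]
      fun t => t ^ 2 := by
    have := hf.mul_isBigO hgO
    simpa using this
  have term2 : (fun t => (a0 + a1*t + a2*t^2) * (g t - (b0 + b1*t + b2*t^2)))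
      =o[𝓝 (0:ℝ)] fun t => t ^ 2 := by
    have := hPfO.mul_isLittleO hg
    simpa using this
  have term3 : (fun t : ℝ => (a1*b2 + a2*b1) * t^3 + a2*b2 * t^4) =o[𝓝 (0:ℝ)]
      fun t => t ^ 2 :=
    (j2_t3.const_mul_left _).add (j2_t4.const_mul_left _)
  exact ((term1.add term2).add term3).congr_left fun t => by ring

lemma j2_sum {ι : Type*} (s : Finset ι) (f : ι → ℝ → ℝ) (a b c : ι → ℝ)
    (h : ∀ i ∈ s, J2 (f i) (a i) (b i) (c i)) :
    J2 (fun t => ∑ i ∈ s, f i t) (∑ i ∈ s, a i) (∑ i ∈ s, b i) (∑ i ∈ s, c i) := by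
  have := IsLittleO.sum (l := 𝓝 (0:ℝ))
    (A := fun i => fun t => f i t - (a i + b i * t + c i * t^2))
    (g' := fun t : ℝ => t ^ 2) (s := s) (fun i hi => h i hi)
  refine this.congr_left fun t => ?_
  simp only [Finset.sum_apply]
  rw [Finset.sum_sub_distrib]
  congr 1
  rw [Finset.sum_add_distrib, Finset.sum_add_distrib, ← Finset.sum_mul, ← Finset.sum_mul]

/-- Sign extraction from an eventually-nonnegative function with zero value at `0`. -/
lemma J2.sign {g : ℝ → ℝ} {g1 g2 : ℝ} (h : J2 g 0 g1 g2)
    (hg : ∀ᶠ t in 𝓝 (0:ℝ), 0 ≤ g t) : g1 = 0 ∧ 0 ≤ g2 := by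
  set φ : ℝ → ℝ := fun t => g t - (0 + g1 * t + g2 * t ^ 2) with hφ
  have hφo : φ =o[𝓝 (0:ℝ)] fun t => t ^ 2 := h
  have hratio : Tendsto (fun t => φ t / t ^ 2) (𝓝 (0:ℝ)) (𝓝 0) :=
    hφo.tendsto_div_nhds_zero
  have hratio1 : Tendsto (fun t => φ t / t) (𝓝 (0:ℝ)) (𝓝 0) := by
    have h2 : Tendsto (fun t : ℝ => (φ t / t ^ 2) * t) (𝓝 (0:ℝ)) (𝓝 0) := by
      simpa using hratio.mul (continuous_id.tendsto (0:ℝ))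
    refine Tendsto.congr (fun t => ?_) h2
    rcases eq_or_ne t 0 with rfl | ht
    · simp
    · field_simp
  have hg1nonneg : 0 ≤ g1 := by
    have hlim : Tendsto (fun t => g1 + g2 * t + φ t / t) (𝓝[>] (0:ℝ)) (𝓝 g1) := by
      have : Tendsto (fun t => g1 + g2 * t + φ t / t) (𝓝 (0:ℝ)) (𝓝 (g1 + g2 * 0 + 0)) :=
        (tendsto_const_nhds.add ((continuous_const.mul continuous_id).tendsto 0)).add hratio1
      simpa using this.mono_left nhdsWithin_le_nhds
    refine ge_of_tendsto hlim ?_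
    filter_upwards [hg.filter_mono nhdsWithin_le_nhds, self_mem_nhdsWithin] with t hgt ht
    have ht' : (0:ℝ) < t := ht
    have hdiv : 0 ≤ g t / t := div_nonneg hgt ht'.le
    have hgeq : g t = g1 * t + g2 * t ^ 2 + φ t := by
      show g t = g1 * t + g2 * t ^ 2 + (g t - (0 + g1 * t + g2 * t ^ 2)); ring
    have heq : g t / t = g1 + g2 * t + φ t / t := by
      rw [hgeq, add_div, add_div, mul_div_assoc]
      rw [div_self ht'.ne', sq, mul_comm t t, ← mul_assoc, mul_div_assoc, div_self ht'.ne']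
      ring
    linarith [heq ▸ hdiv]
  have hg1nonpos : g1 ≤ 0 := by
    have hlim : Tendsto (fun t => g1 + g2 * t + φ t / t) (𝓝[<] (0:ℝ)) (𝓝 g1) := by
      have : Tendsto (fun t => g1 + g2 * t + φ t / t) (𝓝 (0:ℝ)) (𝓝 (g1 + g2 * 0 + 0)) :=
        (tendsto_const_nhds.add ((continuous_const.mul continuous_id).tendsto 0)).add hratio1
      simpa using this.mono_left nhdsWithin_le_nhds
    refine le_of_tendsto hlim ?_
    filter_upwards [hg.filter_mono nhdsWithin_le_nhds, self_mem_nhdsWithin] with t hgt ht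
    have ht' : t < (0:ℝ) := ht
    have hdiv : g t / t ≤ 0 := div_nonpos_of_nonneg_of_nonpos hgt ht'.le
    have hgeq : g t = g1 * t + g2 * t ^ 2 + φ t := by
      show g t = g1 * t + g2 * t ^ 2 + (g t - (0 + g1 * t + g2 * t ^ 2)); ring
    have heq : g t / t = g1 + g2 * t + φ t / t := by
      rw [hgeq, add_div, add_div, mul_div_assoc]
      rw [div_self ht'.ne, sq, mul_comm t t, ← mul_assoc, mul_div_assoc, div_self ht'.ne]
      ring
    linarith [heq ▸ hdiv]
  have hg1 : g1 = 0 := le_antisymm hg1nonpos hg1nonneg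
  refine ⟨hg1, ?_⟩
  have hlim : Tendsto (fun t => g2 + φ t / t ^ 2) (𝓝[≠] (0:ℝ)) (𝓝 g2) := by
    have : Tendsto (fun t => g2 + φ t / t ^ 2) (𝓝 (0:ℝ)) (𝓝 (g2 + 0)) :=
      tendsto_const_nhds.add hratio
    simpa using this.mono_left nhdsWithin_le_nhds
  refine ge_of_tendsto hlim ?_
  filter_upwards [hg.filter_mono nhdsWithin_le_nhds, self_mem_nhdsWithin] with t hgt ht
  have ht' : t ≠ (0:ℝ) := ht
  have hdiv : 0 ≤ g t / t ^ 2 := div_nonneg hgt (by positivity)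
  have hgeq : g t = g2 * t ^ 2 + φ t := by
    show g t = g2 * t ^ 2 + (g t - (0 + g1 * t + g2 * t ^ 2)); rw [hg1]; ring
  have heq : g t / t ^ 2 = g2 + φ t / t ^ 2 := by
    rw [hgeq, add_div, mul_div_assoc, div_self (pow_ne_zero 2 ht'), mul_one]
  linarith [heq ▸ hdiv]

/-! ### Matrix trace helpers -/

lemma trace_form {p q : ℕ} (X Y : Matrix (Fin p) (Fin q) ℝ) :
    Matrix.trace (Xᵀ * Y) = ∑ j, ∑ i, X i j * Y i j := by
  simp [Matrix.trace, Matrix.diag, Matrix.mul_apply]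

lemma trace_pair_symm {p q : ℕ} (X Y : Matrix (Fin p) (Fin q) ℝ) :
    Matrix.trace (Xᵀ * Y) = Matrix.trace (Yᵀ * X) := by
  rw [← Matrix.trace_transpose, Matrix.transpose_mul, Matrix.transpose_transpose]

lemma eq_zero_of_trace_sq {p q : ℕ} (X : Matrix (Fin p) (Fin q) ℝ)
    (h : Matrix.trace (Xᵀ * X) = 0) : X = 0 := by
  rw [trace_form] at h
  ext i j
  have hnn : ∀ j' ∈ (Finset.univ : Finset (Fin q)), 0 ≤ ∑ i', X i' j' * X i' j' :=
    fun j' _ => Finset.sum_nonneg fun i' _ => mul_self_nonneg _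
  have h1 : ∑ i', X i' j * X i' j = 0 :=
    (Finset.sum_eq_zero_iff_of_nonneg hnn).mp h j (Finset.mem_univ j)
  have h2 : X i j * X i j = 0 :=
    (Finset.sum_eq_zero_iff_of_nonneg (fun i' _ => mul_self_nonneg (X i' j))).mp h1 i
      (Finset.mem_univ i)
  simpa [mul_self_eq_zero] using h2

lemma q0_pos {n k : ℕ} (hk1 : 1 ≤ k) (A : Matrix (Fin n) (Fin n) ℝ) (hA : A.PosDef)
    (G : Matrix (Fin n) (Fin k) ℝ) (hG : Gᵀ * G = 1) :
    0 < Matrix.trace (Gᵀ * A * G) := by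
  have hform : Matrix.trace (Gᵀ * A * G)
      = ∑ j, (fun i => G i j) ⬝ᵥ (A *ᵥ fun i => G i j) := by
    rw [Matrix.mul_assoc, trace_form]
    refine Finset.sum_congr rfl fun j _ => ?_
    simp [dotProduct, Matrix.mul_apply, Matrix.mulVec]
  rw [hform]
  have j0 : Fin k := ⟨0, lt_of_lt_of_le Nat.zero_lt_one hk1⟩
  have hcol : (fun i => G i j0) ≠ 0 := by
    intro hc
    have h1 : (Gᵀ * G) j0 j0 = (1 : ℝ) := by rw [hG]; simp [Matrix.one_apply]
    rw [Matrix.mul_apply] at h1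
    simp only [Matrix.transpose_apply] at h1
    have : ∑ i, G i j0 * G i j0 = 0 := by
      refine Finset.sum_eq_zero fun i _ => ?_
      have : G i j0 = 0 := congrFun hc i
      simp [this]
    rw [this] at h1
    exact one_ne_zero h1.symm
  refine Finset.sum_pos' (fun j _ => ?_) ⟨j0, Finset.mem_univ j0, ?_⟩
  · have := hA.posSemidef.dotProduct_mulVec_nonneg (fun i => G i j)
    simpa using this
  · have := hA.dotProduct_mulVec_pos hcol
    simpa using this

/-- The skew generator of the Cayley curve through `G` in tangent direction `T`. -/
def zMat {n k : ℕ} (G T : Matrix (Fin n) (Fin k) ℝ) : Matrix (Fin n) (Fin n) ℝ :=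
  T * Gᵀ - G * Tᵀ - G * (Gᵀ * T) * Gᵀ



section KeyLemma

attribute [local instance] Matrix.linftyOpSeminormedAddCommGroup Matrix.linftyOpNormedSpace

lemma entry_le_norm {p q : ℕ} (M : Matrix (Fin p) (Fin q) ℝ) (i : Fin p) (j : Fin q) :
    ‖M i j‖ ≤ ‖M‖ := by
  have h1 : ‖M i j‖₊ ≤ ∑ j', ‖M i j'‖₊ :=
    Finset.single_le_sum (f := fun j' => ‖M i j'‖₊) (fun _ _ => zero_le) (Finset.mem_univ j)
  have h2 : (∑ j', ‖M i j'‖₊) ≤ (Finset.univ : Finset (Fin p)).sup fun i' => ∑ j', ‖M i' j'‖₊ :=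
    Finset.le_sup (f := fun i' => ∑ j', ‖M i' j'‖₊) (Finset.mem_univ i)
  have := h1.trans h2
  rw [Matrix.linfty_opNorm_def]
  exact_mod_cast this

lemma sum_split3 {p q : ℕ} (f g h : Fin q → Fin p → ℝ) :
    (∑ j, ∑ i, (f j i + g j i + h j i))
      = (∑ j, ∑ i, f j i) + (∑ j, ∑ i, g j i) + (∑ j, ∑ i, h j i) := by
  simp [Finset.sum_add_distrib]

lemma sum_half {p q : ℕ} (f : Fin q → Fin p → ℝ) :
    (∑ j, ∑ i, f j i / 2) = (∑ j, ∑ i, f j i)/2 := by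
  simp [Finset.sum_div]

set_option maxHeartbeats 1600000 in
lemma key_jets {n k : ℕ} (hk1 : 1 ≤ k)
    (A : Matrix (Fin n) (Fin n) ℝ) (hA : A.PosDef)
    (D G T : Matrix (Fin n) (Fin k) ℝ)
    (htr : Matrix.trace (Gᵀ * D) ≠ 0)
    (hloc : IsLocalMaxEta A D G)
    (hT : Tᵀ * G = -(Gᵀ * T)) :
    (Matrix.trace (Gᵀ*D))^2 * (Matrix.trace (Gᵀ*(A*T)) + Matrix.trace (Tᵀ*(A*G)))
      - Matrix.trace (Gᵀ*A*G) * (2 * Matrix.trace (Gᵀ*D) * Matrix.trace (Tᵀ*D)) = 0 ∧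
    0 ≤ (Matrix.trace (Gᵀ*D))^2 *
          (Matrix.trace (Gᵀ*(A*(zMat G T * T)))/2 + Matrix.trace (Tᵀ*(A*T))
            + Matrix.trace ((zMat G T * T)ᵀ*(A*G))/2)
        - Matrix.trace (Gᵀ*A*G) *
          (Matrix.trace (Tᵀ*D)^2 + Matrix.trace (Gᵀ*D) * Matrix.trace ((zMat G T * T)ᵀ*D)) := by
  obtain ⟨hG, ε, hε, hmax⟩ := hloc
  set Z : Matrix (Fin n) (Fin n) ℝ := zMat G T with hZdef
  -- basic algebraic properties of Z
  have hZt : Zᵀ = -Z := by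
    simp only [hZdef, zMat, Matrix.transpose_sub, Matrix.transpose_mul,
      Matrix.transpose_transpose]
    rw [hT]
    simp only [Matrix.neg_mul, Matrix.mul_neg, sub_neg_eq_add, neg_sub, Matrix.mul_assoc]
    abel
  have hZG : Z * G = T := by
    simp only [hZdef, zMat, Matrix.sub_mul, Matrix.mul_assoc, hG, Matrix.mul_one, hT,
      Matrix.mul_neg, Matrix.neg_mul, sub_neg_eq_add]
    abel
  have hGZ : Gᵀ * Z = -Tᵀ := by
    simp only [hZdef, zMat, Matrix.mul_sub, ← Matrix.mul_assoc, hG, Matrix.one_mul]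
    abel
  -- the Cayley curve
  set Y : ℝ → Matrix (Fin n) (Fin n) ℝ := fun t => 1 - (t/2) • Z with hY
  set Wc : ℝ → Matrix (Fin n) (Fin n) ℝ := fun t => 1 + (t/2) • Z with hWc
  set γ : ℝ → Matrix (Fin n) (Fin k) ℝ := fun t => (Y t)⁻¹ * (Wc t * G) with hγ
  have hYcont : Continuous Y := by
    rw [hY]; exact continuous_const.sub ((continuous_id.div_const 2).smul continuous_const)
  have hdet : Tendsto (fun t => (Y t).det) (𝓝 0) (𝓝 1) := by
    have hc : Continuous fun t => (Y t).det := hYcont.matrix_det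
    have h0 : (Y 0).det = 1 := by simp [hY]
    simpa [h0] using hc.tendsto 0
  have hunit : ∀ᶠ t in 𝓝 (0:ℝ), IsUnit (Y t).det :=
    (hdet.eventually_ne one_ne_zero).mono fun t h => isUnit_iff_ne_zero.mpr h
  have hYt : ∀ t, (Y t)ᵀ = Wc t := by
    intro t
    simp [hY, hWc, Matrix.transpose_smul, hZt, smul_neg, sub_neg_eq_add]
  have hWt : ∀ t, (Wc t)ᵀ = Y t := by
    intro t
    simp [hY, hWc, Matrix.transpose_smul, hZt, smul_neg, sub_eq_add_neg]
  have hcomm1 : ∀ t, Y t * Wc t = Wc t * Y t := by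
    intro t
    simp only [hY, hWc, Matrix.mul_sub, Matrix.mul_add, Matrix.sub_mul, Matrix.add_mul,
      Matrix.mul_smul, Matrix.smul_mul, Matrix.mul_one, Matrix.one_mul, smul_smul]
    module
  -- orthogonality of the curve
  have horth : ∀ t, IsUnit (Y t).det → (γ t)ᵀ * γ t = 1 := by
    intro t hu
    have hdetW : IsUnit (Wc t).det := by rw [← hYt t, Matrix.det_transpose]; exact hu
    have hKdet : IsUnit ((Y t) * (Wc t)).det := by rw [Matrix.det_mul]; exact hu.mul hdetW
    have hcommK : Y t * (Y t * Wc t) = (Y t * Wc t) * Y t := by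
      conv_lhs => rw [hcomm1 t]
      rw [Matrix.mul_assoc, ← hcomm1 t, ← Matrix.mul_assoc]
    have hYKinv : Y t * (Y t * Wc t)⁻¹ = (Y t * Wc t)⁻¹ * Y t := by
      have h1 : (Y t * Wc t)⁻¹ * ((Y t * (Y t * Wc t)) * (Y t * Wc t)⁻¹)
          = (Y t * Wc t)⁻¹ * (((Y t * Wc t) * Y t) * (Y t * Wc t)⁻¹) := by rw [hcommK]
      rw [Matrix.mul_assoc (Y t) (Y t * Wc t) (Y t * Wc t)⁻¹,
        Matrix.mul_nonsing_inv _ hKdet, Matrix.mul_one] at h1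
      rw [← Matrix.mul_assoc ((Y t * Wc t)⁻¹) ((Y t * Wc t) * Y t) ((Y t * Wc t)⁻¹),
        ← Matrix.mul_assoc ((Y t * Wc t)⁻¹) (Y t * Wc t) (Y t),
        Matrix.nonsing_inv_mul _ hKdet, Matrix.one_mul] at h1
      exact h1.symm
    have e1 : (γ t)ᵀ = (Gᵀ * Y t) * (Wc t)⁻¹ := by
      rw [hγ]
      show ((Y t)⁻¹ * (Wc t * G))ᵀ = _
      rw [Matrix.transpose_mul, Matrix.transpose_nonsing_inv, hYt t, Matrix.transpose_mul,
        hWt t, Matrix.mul_assoc]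
    calc (γ t)ᵀ * γ t
        = ((Gᵀ * Y t) * ((Wc t)⁻¹ * (Y t)⁻¹)) * (Wc t * G) := by
          rw [e1, hγ]; simp only [Matrix.mul_assoc]
      _ = ((Gᵀ * Y t) * (Y t * Wc t)⁻¹) * (Wc t * G) := by rw [← Matrix.mul_inv_rev]
      _ = (Gᵀ * (Y t * (Y t * Wc t)⁻¹)) * (Wc t * G) := by simp only [Matrix.mul_assoc]
      _ = (Gᵀ * ((Y t * Wc t)⁻¹ * Y t)) * (Wc t * G) := by rw [hYKinv]
      _ = Gᵀ * ((Y t * Wc t)⁻¹ * ((Y t * Wc t) * G)) := by simp only [Matrix.mul_assoc]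
      _ = Gᵀ * G := by
          rw [← Matrix.mul_assoc ((Y t * Wc t)⁻¹) (Y t * Wc t) G,
            Matrix.nonsing_inv_mul _ hKdet, Matrix.one_mul]
      _ = 1 := hG
  -- the exact third-order remainder identity
  have hYmul : ∀ t, IsUnit (Y t).det → Y t * γ t = Wc t * G := by
    intro t ht
    rw [hγ]
    show Y t * ((Y t)⁻¹ * (Wc t * G)) = Wc t * G
    rw [← Matrix.mul_assoc, Matrix.mul_nonsing_inv _ ht, Matrix.one_mul]
  have hcancel : ∀ t, IsUnit (Y t).det → ∀ M N' : Matrix (Fin n) (Fin k) ℝ,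
      Y t * M = Y t * N' → M = N' := by
    intro t ht M N' h
    have h2 := congrArg (fun X => (Y t)⁻¹ * X) h
    simpa [← Matrix.mul_assoc, Matrix.nonsing_inv_mul _ ht] using h2
  have hZcomm : ∀ t, Y t * (Z*Z*Z) = (Z*Z*Z) * Y t := by
    intro t
    simp only [hY, Matrix.sub_mul, Matrix.mul_sub, Matrix.smul_mul, Matrix.mul_smul,
      Matrix.one_mul, Matrix.mul_one, Matrix.mul_assoc]
  have hΦeq : ∀ t, IsUnit (Y t).det →
      γ t - (G + t • T + (t^2/2) • (Z*T)) = ((t/2)^3) • ((Z*Z*Z) * (G + γ t)) := by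
    intro t ht
    apply hcancel t ht
    rw [Matrix.mul_sub, hYmul t ht, Matrix.mul_smul, ← Matrix.mul_assoc, hZcomm t,
      Matrix.mul_assoc (Z*Z*Z) (Y t) (G + γ t), Matrix.mul_add (Y t) G (γ t), hYmul t ht]
    simp only [hY, hWc, Matrix.sub_mul, Matrix.add_mul, Matrix.mul_add, Matrix.mul_sub,
      Matrix.smul_mul, Matrix.mul_smul, Matrix.one_mul, Matrix.mul_one, smul_add,
      smul_sub, smul_smul, Matrix.mul_assoc, hZG]
    module
  -- norm bound for the remainder
  set Φ : ℝ → Matrix (Fin n) (Fin k) ℝ := fun t => γ t - (G + t • T + (t^2/2) • (Z*T)) with hΦ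
  have hΦbound : Φ =o[𝓝 (0:ℝ)] fun t => t^2 := by
    have hbigO : Φ =O[𝓝 (0:ℝ)] fun t => t^3 := by
      rw [isBigO_iff]
      refine ⟨‖Z*Z*Z‖ * (2*‖G‖ + ‖T‖ + ‖Z*T‖) / 4, ?_⟩
      have h1 : ∀ᶠ t in 𝓝 (0:ℝ), |t| ≤ 1 := by
        have : Tendsto (fun t : ℝ => |t|) (𝓝 0) (𝓝 0) := by
          simpa using continuous_abs.tendsto (0:ℝ)
        filter_upwards [this.eventually_lt_const (by norm_num : (0:ℝ) < 1)] with t h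
        exact le_of_lt h
      have h2 : ∀ᶠ t in 𝓝 (0:ℝ), |t|^3/8 * ‖Z*Z*Z‖ ≤ 1/2 := by
        have hc : Tendsto (fun t : ℝ => |t|^3/8 * ‖Z*Z*Z‖) (𝓝 0) (𝓝 0) := by
          have hcont : Continuous fun t : ℝ => |t|^3/8 * ‖Z*Z*Z‖ :=
            (((continuous_abs.pow 3).div_const 8).mul continuous_const)
          simpa using hcont.tendsto 0
        filter_upwards [hc.eventually_lt_const (by norm_num : (0:ℝ) < 1/2)] with t h
        exact le_of_lt h
      filter_upwards [hunit, h1, h2] with t hu ht1 ht2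
      have hexp := hΦeq t hu
      have hγsum : γ t = G + t • T + (t^2/2) • (Z*T) + Φ t := by simp only [hΦ]; abel
      have hnorm1 : ‖Φ t‖ = |t/2|^3 * ‖(Z*Z*Z) * (G + γ t)‖ := by
        simp only [hΦ]
        rw [hexp, norm_smul, Real.norm_eq_abs, abs_pow]
      have hnorm2 : ‖(Z*Z*Z) * (G + γ t)‖ ≤ ‖Z*Z*Z‖ * ‖G + γ t‖ :=
        Matrix.linfty_opNorm_mul _ _
      have hnorm3 : ‖G + γ t‖ ≤ 2*‖G‖ + ‖T‖ + ‖Z*T‖ + ‖Φ t‖ := by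
        rw [hγsum]
        have e1 : G + (G + t • T + (t ^ 2 / 2) • (Z * T) + Φ t)
            = (G + G) + (t • T + ((t ^ 2 / 2) • (Z * T) + Φ t)) := by abel
        rw [e1]
        refine le_trans (norm_add_le _ _) ?_
        have i1 : ‖G + G‖ ≤ 2*‖G‖ := by
          refine le_trans (norm_add_le _ _) (by linarith)
        have i2 : ‖t • T‖ ≤ ‖T‖ := by
          rw [norm_smul]
          have h1' : ‖t‖ ≤ 1 := by simpa [Real.norm_eq_abs] using ht1
          exact (mul_le_mul_of_nonneg_right h1' (norm_nonneg T)).trans_eq (one_mul _)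
        have i3 : ‖(t ^ 2 / 2) • (Z * T)‖ ≤ ‖Z*T‖ := by
          rw [norm_smul]
          have h1' : |t^2/2| ≤ 1 := by
            rw [abs_div, abs_pow]
            have : |t|^2 ≤ 1 := by nlinarith [abs_nonneg t]
            rw [show |(2:ℝ)| = 2 by norm_num]
            linarith
          have := norm_nonneg (Z*T)
          calc ‖t^2/2‖ * ‖Z*T‖ ≤ 1 * ‖Z*T‖ := by
                apply mul_le_mul_of_nonneg_right _ this
                rw [Real.norm_eq_abs]; exact h1'
            _ = ‖Z*T‖ := one_mul _
        refine le_trans (add_le_add i1 (le_trans (norm_add_le _ _)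
          (add_le_add i2 (le_trans (norm_add_le _ _) (add_le_add i3 (le_refl _)))))) ?_
        linarith
      have hZZZnn : (0:ℝ) ≤ ‖Z*Z*Z‖ := norm_nonneg _
      have habs : |t/2|^3 = |t|^3/8 := by
        rw [abs_div]
        norm_num
        ring
      have hmain : ‖Φ t‖ ≤ |t|^3/8 * (‖Z*Z*Z‖ * (2*‖G‖ + ‖T‖ + ‖Z*T‖ + ‖Φ t‖)) := by
        have step := mul_le_mul_of_nonneg_left (le_trans hnorm2
          (mul_le_mul_of_nonneg_left hnorm3 hZZZnn)) (by positivity : (0:ℝ) ≤ |t|^3/8)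
        calc ‖Φ t‖ = |t|^3/8 * ‖(Z*Z*Z) * (G + γ t)‖ := by rw [hnorm1, habs]
          _ ≤ |t|^3/8 * (‖Z*Z*Z‖ * (2*‖G‖ + ‖T‖ + ‖Z*T‖ + ‖Φ t‖)) := step
      have hΦnn : (0:ℝ) ≤ ‖Φ t‖ := norm_nonneg (Φ t)
      have hhalf : |t|^3/8 * (‖Z*Z*Z‖ * ‖Φ t‖) ≤ 1/2 * ‖Φ t‖ := by
        have := mul_le_mul_of_nonneg_right ht2 hΦnn
        calc |t|^3/8 * (‖Z*Z*Z‖ * ‖Φ t‖) = (|t|^3/8 * ‖Z*Z*Z‖) * ‖Φ t‖ := by ring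
          _ ≤ 1/2 * ‖Φ t‖ := this
      have hfin : ‖Φ t‖ ≤ |t|^3/4 * (‖Z*Z*Z‖ * (2*‖G‖ + ‖T‖ + ‖Z*T‖)) := by
        have expand : |t|^3/8 * (‖Z*Z*Z‖ * (2*‖G‖ + ‖T‖ + ‖Z*T‖ + ‖Φ t‖))
            = |t|^3/8 * (‖Z*Z*Z‖ * (2*‖G‖ + ‖T‖ + ‖Z*T‖)) + |t|^3/8 * (‖Z*Z*Z‖ * ‖Φ t‖) := by
          ring
        have expand2 : |t|^3/4 * (‖Z*Z*Z‖ * (2*‖G‖ + ‖T‖ + ‖Z*T‖))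
            = 2 * (|t|^3/8 * (‖Z*Z*Z‖ * (2*‖G‖ + ‖T‖ + ‖Z*T‖))) := by ring
        linarith [hmain, hhalf]
      calc ‖Φ t‖ ≤ |t|^3/4 * (‖Z*Z*Z‖ * (2*‖G‖ + ‖T‖ + ‖Z*T‖)) := hfin
        _ = ‖Z*Z*Z‖ * (2*‖G‖ + ‖T‖ + ‖Z*T‖) / 4 * ‖t^3‖ := by
            rw [Real.norm_eq_abs, abs_pow]; ring
    exact hbigO.trans_isLittleO j2_t3
  -- entrywise jets of the curve
  have hγjet : ∀ i j, J2 (fun t => γ t i j) (G i j) (T i j) ((Z*T) i j / 2) := by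
    intro i j
    have hentry : (fun t => γ t i j - (G i j + T i j * t + ((Z*T) i j / 2) * t^2))
        =O[𝓝 (0:ℝ)] Φ := by
      refine isBigO_of_le _ fun t => ?_
      have heq : γ t i j - (G i j + T i j * t + ((Z*T) i j / 2) * t^2) = Φ t i j := by
        simp only [hΦ]
        simp [Matrix.sub_apply, Matrix.add_apply, Matrix.smul_apply]
        ring
      rw [heq]
      exact entry_le_norm (Φ t) i j
    exact hentry.trans_isLittleO hΦbound
  -- jets of the numerator and denominator
  have hNjet : J2 (fun t => Matrix.trace ((γ t)ᵀ * D)) (Matrix.trace (Gᵀ*D))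
      (Matrix.trace (Tᵀ*D)) (Matrix.trace ((Z*T)ᵀ*D)/2) := by
    have hsum : ∀ j ∈ (Finset.univ : Finset (Fin k)),
        J2 (fun t => ∑ i, γ t i j * D i j) (∑ i, G i j * D i j) (∑ i, T i j * D i j)
          (∑ i, ((Z*T) i j * D i j)/2) := by
      intro j _
      refine j2_sum _ _ _ _ _ fun i _ => ?_
      exact ((hγjet i j).mul_const (D i j)).of_eq rfl rfl (by ring)
    have h2 := j2_sum Finset.univ _ _ _ _ hsum
    have hfun : ∀ t, (∑ j, ∑ i, γ t i j * D i j) = Matrix.trace ((γ t)ᵀ * D) :=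
      fun t => (trace_form (γ t) D).symm
    refine (h2.congr_fun hfun).of_eq ?_ ?_ ?_
    · rw [trace_form]
    · rw [trace_form]
    · rw [sum_half, trace_form]
  have hAγjet : ∀ i j, J2 (fun t => (A * γ t) i j) ((A*G) i j) ((A*T) i j)
      ((A*(Z*T)) i j / 2) := by
    intro i j
    have hsum := j2_sum Finset.univ (fun l => fun t => A i l * γ t l j)
      (fun l => A i l * G l j) (fun l => A i l * T l j) (fun l => A i l * ((Z*T) l j / 2))
      (fun l _ => (hγjet l j).const_mul (A i l))
    have hfun : ∀ t, (∑ l, A i l * γ t l j) = (A * γ t) i j :=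
      fun t => (Matrix.mul_apply (M := A) (N := γ t)).symm
    refine (hsum.congr_fun hfun).of_eq (Matrix.mul_apply (M := A) (N := G)).symm
      (Matrix.mul_apply (M := A) (N := T)).symm ?_
    rw [Matrix.mul_apply (M := A) (N := Z*T), Finset.sum_div]
    exact Finset.sum_congr rfl fun l _ => by ring
  have hQjet : J2 (fun t => Matrix.trace ((γ t)ᵀ * A * γ t)) (Matrix.trace (Gᵀ*A*G))
      (Matrix.trace (Gᵀ*(A*T)) + Matrix.trace (Tᵀ*(A*G)))
      (Matrix.trace (Gᵀ*(A*(Z*T)))/2 + Matrix.trace (Tᵀ*(A*T))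
        + Matrix.trace ((Z*T)ᵀ*(A*G))/2) := by
    have hsum : ∀ j ∈ (Finset.univ : Finset (Fin k)),
        J2 (fun t => ∑ i, γ t i j * (A * γ t) i j)
          (∑ i, G i j * (A*G) i j)
          (∑ i, (G i j * (A*T) i j + T i j * (A*G) i j))
          (∑ i, ((G i j * (A*(Z*T)) i j)/2 + T i j * (A*T) i j
            + ((Z*T) i j * (A*G) i j)/2)) := by
      intro j _
      refine j2_sum _ _ _ _ _ fun i _ => ?_
      exact ((hγjet i j).mul (hAγjet i j)).of_eq rfl rfl (by ring)
    have h2 := j2_sum Finset.univ _ _ _ _ hsum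
    have hfun : ∀ t, (∑ j, ∑ i, γ t i j * (A * γ t) i j)
        = Matrix.trace ((γ t)ᵀ * A * γ t) := by
      intro t
      rw [Matrix.mul_assoc, trace_form]
    refine (h2.congr_fun hfun).of_eq ?_ ?_ ?_
    · rw [Matrix.mul_assoc, trace_form]
    · rw [trace_form, trace_form, ← Finset.sum_add_distrib]
      exact Finset.sum_congr rfl fun j _ => by rw [← Finset.sum_add_distrib]
    · rw [sum_split3, sum_half, sum_half, trace_form, trace_form, trace_form]
  -- positivity of the denominator at 0
  have hq0 : 0 < Matrix.trace (Gᵀ*A*G) := q0_pos hk1 A hA G hG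
  -- transfer of local maximality
  have hfrob : Tendsto (fun t => frobNorm (γ t - G)) (𝓝 0) (𝓝 0) := by
    have hterm : ∀ (i : Fin n) (j : Fin k),
        Tendsto (fun t => ((γ t - G) i j)^2) (𝓝 (0:ℝ)) (𝓝 0) := by
      intro i j
      have h1 : Tendsto (fun t => γ t i j - G i j) (𝓝 (0:ℝ)) (𝓝 0) := by
        have := (hγjet i j).tendsto.sub (tendsto_const_nhds (x := G i j))
        rwa [sub_self] at this
      have h2 : Tendsto (fun t => (γ t i j - G i j)^2) (𝓝 (0:ℝ)) (𝓝 0) := by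
        have := h1.pow 2
        rwa [(by norm_num : ((0:ℝ))^2 = 0)] at this
      have hEq : (fun t => ((γ t - G) i j)^2) = fun t => (γ t i j - G i j)^2 := by
        funext t; rw [Matrix.sub_apply]
      rw [hEq]; exact h2
    have hsum : Tendsto (fun t => ∑ i, ∑ j, ((γ t - G) i j)^2) (𝓝 (0:ℝ)) (𝓝 0) := by
      have := tendsto_finset_sum (Finset.univ : Finset (Fin n))
        (fun i _ => tendsto_finset_sum (Finset.univ : Finset (Fin k))
          (fun j _ => hterm i j))
      simpa using this
    have hs : Tendsto (fun t => Real.sqrt (∑ i, ∑ j, ((γ t - G) i j)^2)) (𝓝 (0:ℝ))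
        (𝓝 (Real.sqrt 0)) := (Real.continuous_sqrt.tendsto 0).comp hsum
    simpa [frobNorm] using hs
  have hQpos : ∀ᶠ t in 𝓝 (0:ℝ), 0 < Matrix.trace ((γ t)ᵀ * A * γ t) :=
    hQjet.tendsto.eventually (lt_mem_nhds hq0)
  have hev : ∀ᶠ t in 𝓝 (0:ℝ),
      0 ≤ Matrix.trace (Gᵀ*D)^2 * Matrix.trace ((γ t)ᵀ * A * γ t)
          - Matrix.trace (Gᵀ*A*G) * Matrix.trace ((γ t)ᵀ * D)^2 := by
    filter_upwards [hunit, hfrob.eventually_lt_const hε, hQpos] with t hu hf hQt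
    have hle := hmax (γ t) (horth t hu) hf
    unfold eta at hle
    rw [div_le_div_iff₀ hQt hq0] at hle
    nlinarith [hle]
  -- assemble the jet of the test function
  have hgjet : J2 (fun t => Matrix.trace (Gᵀ*D)^2 * Matrix.trace ((γ t)ᵀ * A * γ t)
        - Matrix.trace (Gᵀ*A*G) * Matrix.trace ((γ t)ᵀ * D)^2) 0
      (Matrix.trace (Gᵀ*D)^2 * (Matrix.trace (Gᵀ*(A*T)) + Matrix.trace (Tᵀ*(A*G)))
        - Matrix.trace (Gᵀ*A*G) * (2 * Matrix.trace (Gᵀ*D) * Matrix.trace (Tᵀ*D)))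
      (Matrix.trace (Gᵀ*D)^2 *
          (Matrix.trace (Gᵀ*(A*(zMat G T * T)))/2 + Matrix.trace (Tᵀ*(A*T))
            + Matrix.trace ((zMat G T * T)ᵀ*(A*G))/2)
        - Matrix.trace (Gᵀ*A*G) *
          (Matrix.trace (Tᵀ*D)^2
            + Matrix.trace (Gᵀ*D) * Matrix.trace ((zMat G T * T)ᵀ*D))) := by
    have hsq := hNjet.mul hNjet
    have hcomp := (hQjet.const_mul (Matrix.trace (Gᵀ*D)^2)).sub
      (hsq.const_mul (Matrix.trace (Gᵀ*A*G)))
    have := hcomp.congr_fun (g := fun t =>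
      Matrix.trace (Gᵀ*D)^2 * Matrix.trace ((γ t)ᵀ * A * γ t)
        - Matrix.trace (Gᵀ*A*G) * Matrix.trace ((γ t)ᵀ * D)^2) fun t => by ring
    refine this.of_eq (by ring) (by ring) ?_
    rw [← hZdef]
    ring
  obtain ⟨hg1, hg2⟩ := hgjet.sign hev
  exact ⟨hg1, hg2⟩


end KeyLemma

end SOAux

set_option maxHeartbeats 800000 in
/-- second-order necessary condition at a local maximizer `G` of `η` on `𝕆^{n×k}`:
for every nonzero `H` with `HᵀG = −GᵀH`,
`tr(DᵀH)² ≤ η(G)·(tr(HᵀAH) − tr(H M(G) Hᵀ))`. -/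
theorem secondOrder_necessary_of_localMax
    (n k : ℕ) (hk1 : 1 ≤ k) (hkn : k < n)
    (A : Matrix (Fin n) (Fin n) ℝ) (hA : A.PosDef)
    (D : Matrix (Fin n) (Fin k) ℝ)
    (G : Matrix (Fin n) (Fin k) ℝ)
    (htr : Matrix.trace (Gᵀ * D) ≠ 0)
    (hloc : IsLocalMaxEta A D G) :
    ∀ H : Matrix (Fin n) (Fin k) ℝ, H ≠ 0 → Hᵀ * G = -(Gᵀ * H) →
      (Matrix.trace (Dᵀ * H)) ^ 2 ≤
        eta A D G *
          (Matrix.trace (Hᵀ * A * H) - Matrix.trace (H * Mmat A D G * Hᵀ)) := by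
  intro H _hH0 hHt
  have hG : Gᵀ * G = 1 := hloc.1
  have hAsym : Aᵀ = A := by
    ext i j
    have h1 := congrFun (congrFun hA.1 i) j
    simpa [Matrix.conjTranspose_apply] using h1
  have hq0 : 0 < Matrix.trace (Gᵀ*A*G) := SOAux.q0_pos hk1 A hA G hG
  have hswap : ∀ (X Y' : Matrix (Fin n) (Fin k) ℝ),
      Matrix.trace (Xᵀ*(A*Y')) = Matrix.trace (Y'ᵀ*(A*X)) := by
    intro X Y'
    calc Matrix.trace (Xᵀ*(A*Y'))
        = Matrix.trace ((Xᵀ*(A*Y'))ᵀ) := (Matrix.trace_transpose _).symm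
      _ = Matrix.trace (Y'ᵀ*(A*X)) := by
          rw [Matrix.transpose_mul, Matrix.transpose_mul, Matrix.transpose_transpose, hAsym,
            Matrix.mul_assoc]
  -- first-order condition along an arbitrary tangent direction
  have foc : ∀ T : Matrix (Fin n) (Fin k) ℝ, Tᵀ * G = -(Gᵀ * T) →
      Matrix.trace (Tᵀ * (A*G - xi A D G • D)) = 0 := by
    intro T hT
    have h1 := (SOAux.key_jets hk1 A hA D G T htr hloc hT).1
    rw [hswap G T] at h1
    have hexp : Matrix.trace (Tᵀ * (A*G - xi A D G • D))
        = Matrix.trace (Tᵀ*(A*G)) - xi A D G * Matrix.trace (Tᵀ*D) := by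
      rw [Matrix.mul_sub, Matrix.mul_smul, Matrix.trace_sub, Matrix.trace_smul, smul_eq_mul]
    rw [hexp]
    unfold xi
    rw [sub_eq_zero, div_mul_eq_mul_div, eq_div_iff htr]
    have h2 : (2 * Matrix.trace (Gᵀ*D)) *
        (Matrix.trace (Tᵀ*(A*G)) * Matrix.trace (Gᵀ*D)
          - Matrix.trace (Gᵀ*A*G) * Matrix.trace (Tᵀ*D)) = 0 := by
      linear_combination h1
    have h3 := (mul_eq_zero.mp h2).resolve_left (mul_ne_zero two_ne_zero htr)
    linarith [h3]
  -- projection: A*G - ξ•D = G * M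
  have hR : A * G - xi A D G • D = G * Mmat A D G := by
    set R := A * G - xi A D G • D with hRdef
    set C := symPart (Gᵀ * R) with hCdef
    have hCsym : Cᵀ = C := by
      rw [hCdef, symPart, Matrix.transpose_smul, Matrix.transpose_add,
        Matrix.transpose_transpose, add_comm]
    set T0 := R - G * C with hT0def
    have htan : T0ᵀ * G = -(Gᵀ * T0) := by
      have e1 : Gᵀ * T0 = Gᵀ * R - C := by
        rw [hT0def, Matrix.mul_sub, ← Matrix.mul_assoc, hG, Matrix.one_mul]
      have e2 : T0ᵀ * G = Rᵀ * G - C := by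
        rw [hT0def, Matrix.transpose_sub, Matrix.transpose_mul, hCsym, Matrix.sub_mul,
          Matrix.mul_assoc, hG, Matrix.mul_one]
      have e3 : C = (1/2 : ℝ) • (Gᵀ*R + Rᵀ*G) := by
        rw [hCdef, symPart, Matrix.transpose_mul, Matrix.transpose_transpose]
      rw [e1, e2, e3]
      module
    have h0 := foc T0 htan
    have hsplit : Matrix.trace (T0ᵀ * R)
        = Matrix.trace (T0ᵀ * T0) + Matrix.trace (T0ᵀ * (G*C)) := by
      have hRT : R = T0 + G * C := by rw [hT0def]; abel
      calc Matrix.trace (T0ᵀ * R) = Matrix.trace (T0ᵀ * (T0 + G * C)) := by rw [← hRT]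
        _ = _ := by rw [Matrix.mul_add, Matrix.trace_add]
    have hskew : (T0ᵀ * G)ᵀ = -(T0ᵀ * G) := by
      rw [Matrix.transpose_mul, Matrix.transpose_transpose, htan, neg_neg]
    have hzero : Matrix.trace (T0ᵀ * (G*C)) = 0 := by
      have e4 : T0ᵀ * (G*C) = (T0ᵀ*G)*C := by rw [Matrix.mul_assoc]
      have e5 : Matrix.trace ((T0ᵀ*G)*C) = - Matrix.trace ((T0ᵀ*G)*C) := by
        calc Matrix.trace ((T0ᵀ*G)*C)
            = Matrix.trace (((T0ᵀ*G)*C)ᵀ) := (Matrix.trace_transpose _).symm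
          _ = Matrix.trace (Cᵀ * (T0ᵀ*G)ᵀ) := by rw [Matrix.transpose_mul]
          _ = Matrix.trace (C * -(T0ᵀ*G)) := by rw [hCsym, hskew]
          _ = - Matrix.trace (C * (T0ᵀ*G)) := by rw [Matrix.mul_neg, Matrix.trace_neg]
          _ = - Matrix.trace ((T0ᵀ*G) * C) := by rw [Matrix.trace_mul_comm]
      rw [e4]
      linarith [e5]
    have hT0T0 : Matrix.trace (T0ᵀ * T0) = 0 := by
      rw [hsplit, hzero] at h0
      linarith [h0]
    have hT00 : T0 = 0 := SOAux.eq_zero_of_trace_sq T0 hT0T0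
    have hRC : R = G * C := by
      have := sub_eq_zero.mp (hT0def ▸ hT00)
      exact this
    rw [hRC, hCdef]
    congr 1
    rw [Mmat, hRdef]
    congr 1
    rw [Matrix.mul_sub, Matrix.mul_smul, ← Matrix.mul_assoc]
  -- second-order inequality with T = H
  have h2 := (SOAux.key_jets hk1 A hA D G H htr hloc hHt).2
  rw [hswap G (SOAux.zMat G H * H)] at h2
  have hGZH : Gᵀ * SOAux.zMat G H = -Hᵀ := by
    simp only [SOAux.zMat, Matrix.mul_sub, ← Matrix.mul_assoc, hG, Matrix.one_mul]
    abel
  have hGW : Gᵀ * (SOAux.zMat G H * H) = -(Hᵀ*H) := by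
    rw [← Matrix.mul_assoc, hGZH, Matrix.neg_mul]
  have hWG : (SOAux.zMat G H * H)ᵀ * G = -(Hᵀ*H) := by
    have h3 := congrArg Matrix.transpose hGW
    rw [Matrix.transpose_mul, Matrix.transpose_transpose] at h3
    rw [h3, Matrix.transpose_neg, Matrix.transpose_mul, Matrix.transpose_transpose]
  have hAG : A * G = G * Mmat A D G + xi A D G • D := by
    rw [← hR]; abel
  have hWAG : Matrix.trace ((SOAux.zMat G H * H)ᵀ*(A*G))
      = - Matrix.trace (Hᵀ*H*(Mmat A D G))
        + xi A D G * Matrix.trace ((SOAux.zMat G H * H)ᵀ*D) := by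
    rw [hAG, Matrix.mul_add, Matrix.trace_add, Matrix.mul_smul, Matrix.trace_smul, smul_eq_mul]
    congr 1
    rw [← Matrix.mul_assoc, hWG, Matrix.neg_mul, Matrix.trace_neg, Matrix.mul_assoc]
  rw [hWAG] at h2
  -- final arithmetic
  have hDH : Matrix.trace (Dᵀ * H) = Matrix.trace (Hᵀ * D) := SOAux.trace_pair_symm D H
  have hMtr : Matrix.trace (H * Mmat A D G * Hᵀ) = Matrix.trace (Hᵀ*H*(Mmat A D G)) := by
    rw [Matrix.trace_mul_comm, ← Matrix.mul_assoc, Matrix.mul_assoc]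
  have hAH : Matrix.trace (Hᵀ * A * H) = Matrix.trace (Hᵀ*(A*H)) := by
    rw [Matrix.mul_assoc]
  rw [hDH, hMtr, hAH, eta]
  rw [div_mul_eq_mul_div, le_div_iff₀ hq0]
  have hxiid : Matrix.trace (Gᵀ*D)^2 *
      (xi A D G * Matrix.trace ((SOAux.zMat G H * H)ᵀ*D))
      = Matrix.trace (Gᵀ*A*G) *
        (Matrix.trace (Gᵀ*D) * Matrix.trace ((SOAux.zMat G H * H)ᵀ*D)) := by
    unfold xi
    field_simp
  nlinarith [h2, hxiid]
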